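/- arXiv:2405.10649 — 2 statements merged into one kernel-verified Lean document; each statement's English description precedes it below -/
import Mathlib

section
/- Let H = Σ_{i=0}^{Ψ} h_i S^i be a graph filter of order Ψ built from a graph shift operator S of the graph G, and let D_q, D_{q'} ⊆ V be two node subsets such that d_G(k,m) > 2Ψ for every k ∈ D_q and every m ∈ D_{q'}. Then the column spaces spanned by the corresponding columns of H are orthogonal: for every vector u in the span of {H_k : k ∈ D_q} and every vector v in the span of {H_m : m ∈ D_{q'}}, it holds that u^T v = 0. -/
private lemma pow_entry_zero {V : Type*} [Fintype V] [DecidableEq V]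
    (G : SimpleGraph V) (S : Matrix V V ℝ)
    (hS : ∀ k m : V, (1 : ℕ∞) < G.edist k m → S k m = 0) :
    ∀ (i : ℕ) (k m : V), (i : ℕ∞) < G.edist k m → (S ^ i) k m = 0 := by
  intro i
  induction i with
  | zero =>
    intro k m hlt
    have hne : k ≠ m := by
      rintro rfl
      simp [SimpleGraph.edist_self] at hlt
    simp [Matrix.one_apply, hne]
  | succ i ih =>
    intro k m hlt
    rw [pow_succ, Matrix.mul_apply]
    apply Finset.sum_eq_zero
    intro j _
    by_cases hj : (i : ℕ∞) < G.edist k j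
    · rw [ih k j hj, zero_mul]
    · push_neg at hj
      have h1 : (1 : ℕ∞) < G.edist j m := by
        by_contra hc
        push_neg at hc
        have := G.edist_triangle (u := k) (v := j) (w := m)
        have : G.edist k m ≤ (i : ℕ∞) + 1 := le_trans this (add_le_add hj hc)
        have : G.edist k m ≤ ((i + 1 : ℕ) : ℕ∞) := by
          simpa [Nat.cast_add] using this
        exact absurd hlt (not_lt.mpr this)
      rw [hS j m h1, mul_zero]

private lemma H_entry_zero {V : Type*} [Fintype V] [DecidableEq V]
    (G : SimpleGraph V) (S : Matrix V V ℝ)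
    (hS : ∀ k m : V, (1 : ℕ∞) < G.edist k m → S k m = 0)
    (Ψ : ℕ) (h : ℕ → ℝ) (H : Matrix V V ℝ)
    (hH : H = ∑ i ∈ Finset.range (Ψ + 1), h i • S ^ i)
    (k m : V) (hd : ((Ψ : ℕ) : ℕ∞) < G.edist k m) : H k m = 0 := by
  subst hH
  rw [Matrix.sum_apply]
  apply Finset.sum_eq_zero
  intro i hi
  have hiΨ : i ≤ Ψ := Nat.lt_succ_iff.mp (Finset.mem_range.mp hi)
  have : (i : ℕ∞) < G.edist k m := lt_of_le_of_lt (by exact_mod_cast hiΨ) hd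
  simp [pow_entry_zero G S hS i k m this]

/-- Let `H = ∑_{i=0}^{Ψ} h i • S ^ i` be a graph filter built from a graph
shift operator `S` of `G`, and let `D_q`, `D_q'` be node subsets with `d_G(k,m) > 2Ψ` for
every `k ∈ D_q` and `m ∈ D_q'`. Then the corresponding column spaces of `H` are
orthogonal: for every `u` in the span of `{H_k : k ∈ D_q}` and every `v` in the span of
`{H_m : m ∈ D_q'}`, one has `uᵀ v = 0`. -/
theorem graphFilter_column_spaces_orthogonal {V : Type*} [Fintype V] [DecidableEq V]
    (G : SimpleGraph V) (S : Matrix V V ℝ)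
    (hS : ∀ k m : V, (1 : ℕ∞) < G.edist k m → S k m = 0)
    (Ψ : ℕ) (hΨ : 1 ≤ Ψ) (h : ℕ → ℝ) (H : Matrix V V ℝ)
    (hH : H = ∑ i ∈ Finset.range (Ψ + 1), h i • S ^ i)
    (Dq Dq' : Set V)
    (hsep : ∀ k ∈ Dq, ∀ m ∈ Dq', ((2 * Ψ : ℕ) : ℕ∞) < G.edist k m)
    (u v : V → ℝ)
    (hu : u ∈ Submodule.span ℝ {w : V → ℝ | ∃ k ∈ Dq, w = fun j => H j k})
    (hv : v ∈ Submodule.span ℝ {w : V → ℝ | ∃ m ∈ Dq', w = fun j => H j m}) :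
    dotProduct u v = 0 := by
  have key : ∀ k ∈ Dq, ∀ m ∈ Dq',
      dotProduct (fun j => H j k) (fun j => H j m) = 0 := by
    intro k hk m hm
    apply Finset.sum_eq_zero
    intro j _
    by_cases hj : ((Ψ : ℕ) : ℕ∞) < G.edist j k
    · have hz : H j k = 0 := H_entry_zero G S hS Ψ h H hH j k hj
      simp [hz]
    · push_neg at hj
      have h2 : ((Ψ : ℕ) : ℕ∞) < G.edist j m := by
        by_contra hc
        push_neg at hc
        have htri := G.edist_triangle (u := k) (v := j) (w := m)
        rw [G.edist_comm] at hj
        have hle : G.edist k m ≤ ((Ψ : ℕ) : ℕ∞) + ((Ψ : ℕ) : ℕ∞) :=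
          le_trans htri (add_le_add hj hc)
        have : G.edist k m ≤ ((2 * Ψ : ℕ) : ℕ∞) := by
          rw [two_mul, Nat.cast_add]; exact hle
        exact absurd (hsep k hk m hm) (not_lt.mpr this)
      have hz : H j m = 0 := H_entry_zero G S hS Ψ h H hH j m h2
      simp [hz]
  have hcol : ∀ k ∈ Dq, dotProduct (fun j => H j k) v = 0 := by
    intro k hk
    refine Submodule.span_induction (p := fun w _ => dotProduct (fun j => H j k) w = 0)
      ?_ ?_ ?_ ?_ hv
    · rintro y ⟨m, hm, rfl⟩; exact key k hk m hm
    · simp [dotProduct]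
    · intro y z _ _ hy hz; rw [dotProduct_add, hy, hz, add_zero]
    · intro c y _ hy; rw [dotProduct_smul, hy, smul_zero]
  refine Submodule.span_induction (p := fun w _ => dotProduct w v = 0)
    ?_ ?_ ?_ ?_ hu
  · rintro x ⟨k, hk, rfl⟩; exact hcol k hk
  · simp [dotProduct]
  · intro y z _ _ hy hz; rw [add_dotProduct, hy, hz, add_zero]
  · intro c y _ hy; rw [smul_dotProduct, hy, smul_zero]
end

section
/- Let H = Σ_{i=0}^{Ψ} h_i S^i be a graph filter of order Ψ built from a graph shift operator S of the graph G, and let D_q, D_{q'} ⊆ V be two node subsets such that d_G(k,m) > 2Ψ for every k ∈ D_q and every m ∈ D_{q'}. Let Ω_q ⊆ D_q and let x ∈ ℝ^{|V|} be a graph signal supported on Ω_q (x_k = 0 for k ∉ Ω_q). Then the orthogonal projection of the filtered signal Hx onto the column space of H_{D_{q'}} (the span of the columns {H_m : m ∈ D_{q'}}) is the zero vector: P_{D_{q'}} (Hx) = 0. -/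
lemma pow_entry_eq_zero {V : Type*} [Fintype V] [DecidableEq V]
    (G : SimpleGraph V) (S : Matrix V V ℝ)
    (hS : ∀ k m : V, (1 : ℕ∞) < G.edist k m → S k m = 0) :
    ∀ i : ℕ, ∀ k m : V, (i : ℕ∞) < G.edist k m → (S ^ i) k m = 0 := by
  intro i
  induction i with
  | zero =>
    intro k m hlt
    have hne : k ≠ m := by
      rintro rfl
      simp [SimpleGraph.edist_self] at hlt
    simp [Matrix.one_apply, hne]
  | succ n ih =>
    intro k m hlt
    rw [pow_succ, Matrix.mul_apply]
    apply Finset.sum_eq_zero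
    intro j _
    by_cases h1 : (n : ℕ∞) < G.edist k j
    · rw [ih k j h1, zero_mul]
    · push_neg at h1
      by_cases h2 : (1 : ℕ∞) < G.edist j m
      · rw [hS j m h2, mul_zero]
      · push_neg at h2
        exfalso
        have := SimpleGraph.edist_triangle (u := k) (v := j) (w := m) (G := G)
        have hle : G.edist k m ≤ (n : ℕ∞) + 1 :=
          this.trans (add_le_add h1 h2)
        exact absurd (lt_of_lt_of_le hlt hle) (by push_cast; simp)

lemma filter_entry_eq_zero {V : Type*} [Fintype V] [DecidableEq V]
    (G : SimpleGraph V) (S : Matrix V V ℝ)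
    (hS : ∀ k m : V, (1 : ℕ∞) < G.edist k m → S k m = 0)
    (Ψ : ℕ) (h : ℕ → ℝ) (H : Matrix V V ℝ)
    (hH : H = ∑ i ∈ Finset.range (Ψ + 1), h i • S ^ i)
    (k m : V) (hlt : ((Ψ : ℕ) : ℕ∞) < G.edist k m) : H k m = 0 := by
  subst hH
  rw [Matrix.sum_apply]
  apply Finset.sum_eq_zero
  intro i hi
  have hi' : i ≤ Ψ := Nat.lt_succ_iff.mp (Finset.mem_range.mp hi)
  have : ((i : ℕ) : ℕ∞) < G.edist k m :=
    lt_of_le_of_lt (by exact_mod_cast hi') hlt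
  rw [Matrix.smul_apply, pow_entry_eq_zero G S hS i k m this, smul_zero]

/-- Let `H = ∑_{i=0}^{Ψ} h i • S ^ i` be a graph filter built from a
graph shift operator `S` of `G`, and let `D_q`, `D_q'` be node subsets with
`d_G(k,m) > 2Ψ` for every `k ∈ D_q` and `m ∈ D_q'`. If `x` is a graph signal supported
on `Ω_q ⊆ D_q`, then the orthogonal projection of the filtered signal `H x` onto the
span of the columns `{H_m : m ∈ D_q'}` is zero: `P_{D_q'} (H x) = 0`. -/
theorem projection_filtered_signal_other_subset_eq_zero {V : Type*} [Fintype V]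
    [DecidableEq V]
    (G : SimpleGraph V) (S : Matrix V V ℝ)
    (hS : ∀ k m : V, (1 : ℕ∞) < G.edist k m → S k m = 0)
    (Ψ : ℕ) (hΨ : 1 ≤ Ψ) (h : ℕ → ℝ) (H : Matrix V V ℝ)
    (hH : H = ∑ i ∈ Finset.range (Ψ + 1), h i • S ^ i)
    (Dq Dq' : Set V)
    (hsep : ∀ k ∈ Dq, ∀ m ∈ Dq', ((2 * Ψ : ℕ) : ℕ∞) < G.edist k m)
    (Ωq : Set V) (hΩq : Ωq ⊆ Dq)
    (x : V → ℝ) (hx : ∀ k : V, k ∉ Ωq → x k = 0) :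
    Submodule.orthogonalProjectionOnto
      (Submodule.span ℝ
        ((fun m => (EuclideanSpace.equiv V ℝ).symm (fun j => H j m)) '' Dq'))
      ((EuclideanSpace.equiv V ℝ).symm (H.mulVec x)) = 0 := by
  rw [Submodule.orthogonalProjectionOnto_eq_zero_iff]
  rw [Submodule.mem_orthogonal]
  intro u hu
  induction hu using Submodule.span_induction with
  | mem u hu =>
    obtain ⟨m, hm, rfl⟩ := hu
    rw [PiLp.inner_apply]
    simp only [PiLp.coe_symm_continuousLinearEquiv, WithLp.ofLp_toLp, RCLike.inner_apply', conj_trivial]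
    -- sum over j of H j m * (H.mulVec x) j
    have key : ∀ k ∈ Dq, ∑ j, H j m * H j k = 0 := by
      intro k hk
      apply Finset.sum_eq_zero
      intro j _
      by_cases h1 : ((Ψ : ℕ) : ℕ∞) < G.edist j m
      · rw [filter_entry_eq_zero G S hS Ψ h H hH j m h1, zero_mul]
      · by_cases h2 : ((Ψ : ℕ) : ℕ∞) < G.edist j k
        · rw [filter_entry_eq_zero G S hS Ψ h H hH j k h2, mul_zero]
        · exfalso
          push_neg at h1 h2
          have htri : G.edist k m ≤ G.edist k j + G.edist j m :=
            SimpleGraph.edist_triangle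
          rw [SimpleGraph.edist_comm] at h2
          have : G.edist k m ≤ ((Ψ : ℕ) : ℕ∞) + ((Ψ : ℕ) : ℕ∞) :=
            htri.trans (add_le_add h2 h1)
          have hsep' := hsep k hk m hm
          have : ((2 * Ψ : ℕ) : ℕ∞) < ((Ψ : ℕ) : ℕ∞) + ((Ψ : ℕ) : ℕ∞) :=
            lt_of_lt_of_le hsep' this
          simp [two_mul] at this
    calc ∑ j, H j m * H.mulVec x j
        = ∑ j, ∑ k, H j m * (H j k * x k) := by
          simp [Matrix.mulVec, dotProduct, Finset.mul_sum]
      _ = ∑ k, (∑ j, H j m * H j k) * x k := by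
          rw [Finset.sum_comm]
          congr 1; ext k
          rw [Finset.sum_mul]
          congr 1; ext j; ring
      _ = 0 := by
          apply Finset.sum_eq_zero
          intro k _
          by_cases hk : k ∈ Ωq
          · rw [key k (hΩq hk), zero_mul]
          · rw [hx k hk, mul_zero]
  | zero => simp
  | add u v _ _ hu hv => rw [inner_add_left, hu, hv, add_zero]
  | smul a u _ hu => rw [inner_smul_left, hu, mul_zero]
end
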